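/- Let k ≥ 2 and t ≥ 1 be integers and let n ≥ 4k + 2t. Let c be an edge-coloring of K_n containing no rainbow copy of kP₄ ∪ tP₂, let H be a rainbow subgraph of K_n isomorphic to (k − 1)P₄ ∪ (t + 2)P₂, with H₁ the union of its k − 1 path components on 4 vertices and H₂ the union of its t + 2 path components on 2 vertices, and let G be a rainbow subgraph of K_n whose edge set contains E(H). Then for each P₄-component P of H₁ the number of edges of G joining V(P) to V(H₂) is at most 2t + 6; consequently |[V(H₁), V(H₂)]_G| ≤ 2(k − 1)(t + 3). -/

import Mathlib

/-- The disjoint union of `k` copies of a graph `G`, on vertex set `Fin k × V`. -/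
def SimpleGraph.multiCopy (k : ℕ) {V : Type*} (G : SimpleGraph V) :
    SimpleGraph (Fin k × V) where
  Adj a b := a.1 = b.1 ∧ G.Adj a.2 b.2
  symm := by
    refine ⟨?_⟩
    intro a b h
    exact ⟨h.1.symm, h.2.symm⟩
  loopless := by
    refine ⟨?_⟩
    intro a h
    exact G.loopless.irrefl _ h.2

/-- The disjoint union of two graphs `G` and `H`, on vertex set `V ⊕ W`. -/
def SimpleGraph.disjUnion {V W : Type*} (G : SimpleGraph V) (H : SimpleGraph W) :
    SimpleGraph (V ⊕ W) where
  Adj a b :=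
    match a, b with
    | Sum.inl a, Sum.inl b => G.Adj a b
    | Sum.inr a, Sum.inr b => H.Adj a b
    | _, _ => False
  symm := by
    refine ⟨?_⟩
    rintro (a | a) (b | b) h <;> simp only at h ⊢
    · exact h.symm
    · exact h.symm
  loopless := by
    refine ⟨?_⟩
    rintro (a | a) h <;> simp only at h
    · exact G.loopless.irrefl _ h
    · exact H.loopless.irrefl _ h

/-- The linear forest `k P₄ ∪ t P₂`. -/
def kP4tP2 (k t : ℕ) : SimpleGraph ((Fin k × Fin 4) ⊕ (Fin t × Fin 2)) :=
  (SimpleGraph.multiCopy k (SimpleGraph.pathGraph 4)).disjUnion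
    (SimpleGraph.multiCopy t (SimpleGraph.pathGraph 2))

/-- The edge-coloring `c` of `K_n` admits a rainbow copy of `H`: there is an injection
of the vertices of `H` into `Fin n` such that distinct edges of `H` get distinct colors. -/
def HasRainbowCopy {V : Type*} (n : ℕ) (c : Sym2 (Fin n) → ℕ) (H : SimpleGraph V) : Prop :=
  ∃ f : V ↪ Fin n, Set.InjOn (fun e => c (Sym2.map (⇑f) e)) H.edgeSet

/-- The number of colors used by an edge-coloring `c` on the edges of `K_n`. -/
noncomputable def colorCount (n : ℕ) (c : Sym2 (Fin n) → ℕ) : ℕ :=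
  (c '' (⊤ : SimpleGraph (Fin n)).edgeSet).ncard

/-- The anti-Ramsey number `AR(n, H)`: the maximum number of colors in an edge-coloring
of `K_n` containing no rainbow copy of `H`. -/
noncomputable def AR {V : Type*} (n : ℕ) (H : SimpleGraph V) : ℕ :=
  sSup {m : ℕ | ∃ c : Sym2 (Fin n) → ℕ, colorCount n c = m ∧ ¬ HasRainbowCopy n c H}

/-- The set of edges of `G` with both endpoints in `A` (the edges of `G[A]`). -/
def edgesInside {α : Type*} (G : SimpleGraph α) (A : Set α) : Set (Sym2 α) :=
  {e ∈ G.edgeSet | ∀ v ∈ e, v ∈ A}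

/-- The set of edges of `G` with one endpoint in `A` and the other in `B`,
i.e. `[A, B]_G`. -/
def edgesBetween {α : Type*} (G : SimpleGraph α) (A B : Set α) : Set (Sym2 α) :=
  {e ∈ G.edgeSet | ∃ u v, e = s(u, v) ∧ u ∈ A ∧ v ∈ B}


namespace St15

/-- adjacency in the template graph on vertices 0..7 (0-3: path, 4-5: pair B, 6-7: pair C),
with cross-edge bitmasks `x` (path to B) and `y` (path to C). -/
def tAdjB (x y u v : ℕ) : Bool :=
  if u < 4 then
    if v < 4 then u + 1 == v || v + 1 == u
    else if v < 6 then x.testBit (2 * u + (v - 4))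
    else y.testBit (2 * u + (v - 6))
  else if v < 4 then
    if u < 6 then x.testBit (2 * v + (u - 4))
    else y.testBit (2 * v + (u - 6))
  else ((u < 6) == (v < 6)) && u != v

abbrev Wit := (ℕ × ℕ × ℕ × ℕ) × (ℕ × ℕ × ℕ × ℕ)

def witVerts (w : Wit) : List ℕ :=
  match w with
  | ((u0, u1, u2, u3), (v0, v1, v2, v3)) => [u0, u1, u2, u3, v0, v1, v2, v3]

def witList : List Wit := [
  ((0, 1, 4, 5), (2, 3, 6, 7)),
  ((0, 1, 5, 4), (2, 3, 7, 6)),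
  ((0, 1, 6, 7), (2, 3, 4, 5)),
  ((0, 1, 7, 6), (2, 3, 5, 4)),
  ((1, 0, 4, 5), (3, 2, 6, 7)),
  ((1, 0, 5, 4), (3, 2, 7, 6)),
  ((1, 0, 6, 7), (3, 2, 4, 5)),
  ((1, 0, 7, 6), (3, 2, 5, 4)),
  ((0, 1, 4, 5), (2, 3, 7, 6)),
  ((0, 1, 5, 4), (2, 3, 6, 7)),
  ((0, 1, 6, 7), (2, 3, 5, 4)),
  ((0, 1, 7, 6), (2, 3, 4, 5)),
  ((1, 0, 4, 5), (3, 2, 7, 6)),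
  ((1, 0, 5, 4), (3, 2, 6, 7)),
  ((1, 0, 6, 7), (3, 2, 5, 4)),
  ((1, 0, 7, 6), (3, 2, 4, 5)),
  ((0, 1, 4, 5), (3, 2, 6, 7)),
  ((1, 0, 4, 5), (2, 3, 6, 7)),
  ((0, 1, 6, 7), (3, 2, 4, 5)),
  ((1, 0, 6, 7), (2, 3, 4, 5)),
  ((0, 1, 2, 4), (5, 3, 7, 6)),
  ((0, 1, 5, 4), (3, 2, 7, 6)),
  ((3, 2, 1, 4), (5, 0, 7, 6)),
  ((0, 1, 2, 5), (4, 3, 6, 7)),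
  ((0, 1, 7, 6), (3, 2, 5, 4)),
  ((3, 2, 1, 5), (4, 0, 6, 7)),
  ((0, 1, 2, 7), (4, 5, 3, 6)),
  ((1, 0, 5, 4), (2, 3, 7, 6)),
  ((0, 1, 2, 5), (4, 3, 7, 6)),
  ((3, 2, 1, 4), (5, 0, 6, 7)),
  ((3, 2, 1, 5), (4, 0, 7, 6))

]

def witOKB (x y : ℕ) (w : Wit) : Bool :=
  match w with
  | ((u0, u1, u2, u3), (v0, v1, v2, v3)) =>
    tAdjB x y u0 u1 && tAdjB x y u1 u2 && tAdjB x y u2 u3 &&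
    tAdjB x y v0 v1 && tAdjB x y v1 v2 && tAdjB x y v2 v3

theorem witList_nodup : ∀ w ∈ witList, (witVerts w).Nodup ∧ ∀ v ∈ witVerts w, v < 8 := by
  decide

/-- popcount for 8-bit numbers -/
def pc (x : ℕ) : ℕ :=
  x % 2 + x / 2 % 2 + x / 4 % 2 + x / 8 % 2 + x / 16 % 2 + x / 32 % 2 + x / 64 % 2 + x / 128 % 2


def maskPairList : List (ℕ × ℕ) := [
  (4, 64),
  (8, 128),
  (64, 4),
  (128, 8),
  (1, 16),
  (2, 32),
  (16, 1),
  (32, 2),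
  (4, 128),
  (8, 64),
  (128, 4),
  (64, 8),
  (1, 32),
  (2, 16),
  (32, 1),
  (16, 2),
  (4, 16),
  (1, 64),
  (16, 4),
  (64, 1),
  (144, 128),
  (8, 32),
  (6, 2),
  (96, 64),
  (32, 8),
  (9, 1),
  (128, 96),
  (2, 128),
  (96, 128),
  (6, 1),
  (9, 2)

]

theorem maskPair_wit : ∀ m ∈ maskPairList, ∃ w ∈ witList, witOKB m.1 m.2 w = true := by
  decide

def maskCheck (x y : ℕ) : Bool :=
  maskPairList.any fun m => (x &&& m.1 == m.1) && (y &&& m.2 == m.2)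

def xs1 : List Nat := [1,2,4,8,16,32,64,128]
def xs2 : List Nat := [3,5,6,9,10,12,17,18,20,24,33,34,36,40,48,65,66,68,72,80,96,129,130,132,136,144,160,192]
def xs3 : List Nat := [7,11,13,14,19,21,22,25,26,28,35,37,38,41,42,44,49,50,52,56,67,69,70,73,74,76,81,82,84,88,97,98,100,104,112,131,133,134,137,138,140,145,146,148,152,161,162,164,168,176,193,194,196,200,208,224]
def xs5 : List Nat := [31,47,55,59,61,62,79,87,91,93,94,103,107,109,110,115,117,118,121,122,124,143,151,155,157,158,167,171,173,174,179,181,182,185,186,188,199,203,205,206,211,213,214,217,218,220,227,229,230,233,234,236,241,242,244,248]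
def xs6 : List Nat := [63,95,111,119,123,125,126,159,175,183,187,189,190,207,215,219,221,222,231,235,237,238,243,245,246,249,250,252]


set_option maxRecDepth 10000 in
theorem cover_check : ((List.range 256).all fun x =>
    (pc x != 1 || xs1.contains x) && (pc x != 2 || xs2.contains x) &&
    (pc x != 3 || xs3.contains x) && (pc x != 5 || xs5.contains x) &&
    (pc x != 6 || xs6.contains x)) = true := by decide

set_option maxRecDepth 10000 in
theorem main33 : (xs3.all fun x => xs3.all fun y => maskCheck x y) = true := by decide
set_option maxRecDepth 10000 in
theorem main52 : (xs5.all fun x => xs2.all fun y => maskCheck x y) = true := by decide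
set_option maxRecDepth 10000 in
theorem main25 : (xs2.all fun x => xs5.all fun y => maskCheck x y) = true := by decide
set_option maxRecDepth 10000 in
theorem main61 : (xs6.all fun x => xs1.all fun y => maskCheck x y) = true := by decide
set_option maxRecDepth 10000 in
theorem main16 : (xs1.all fun x => xs6.all fun y => maskCheck x y) = true := by decide


theorem mem_of_pc {x : ℕ} (hx : x < 256) :
    (pc x = 1 → x ∈ xs1) ∧ (pc x = 2 → x ∈ xs2) ∧ (pc x = 3 → x ∈ xs3) ∧
    (pc x = 5 → x ∈ xs5) ∧ (pc x = 6 → x ∈ xs6) := by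
  have h := List.all_eq_true.mp cover_check x (List.mem_range.mpr hx)
  simp only [Bool.and_eq_true, Bool.or_eq_true, bne_iff_ne, ne_eq, Decidable.not_not,
    List.contains, List.elem_iff] at h
  refine ⟨fun h1 => ?_, fun h1 => ?_, fun h1 => ?_, fun h1 => ?_, fun h1 => ?_⟩ <;>
    simp_all

theorem maskCheck_of_pc {x y : ℕ} (hx : x < 256) (hy : y < 256)
    (h : (pc x = 3 ∧ pc y = 3) ∨ (pc x = 5 ∧ pc y = 2) ∨ (pc x = 2 ∧ pc y = 5)
      ∨ (pc x = 6 ∧ pc y = 1) ∨ (pc x = 1 ∧ pc y = 6)) : maskCheck x y = true := by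
  obtain ⟨hx1, hx2, hx3, hx5, hx6⟩ := mem_of_pc hx
  obtain ⟨hy1, hy2, hy3, hy5, hy6⟩ := mem_of_pc hy
  rcases h with ⟨a, b⟩ | ⟨a, b⟩ | ⟨a, b⟩ | ⟨a, b⟩ | ⟨a, b⟩
  · exact List.all_eq_true.mp (List.all_eq_true.mp main33 x (hx3 a)) y (hy3 b)
  · exact List.all_eq_true.mp (List.all_eq_true.mp main52 x (hx5 a)) y (hy2 b)
  · exact List.all_eq_true.mp (List.all_eq_true.mp main25 x (hx2 a)) y (hy5 b)
  · exact List.all_eq_true.mp (List.all_eq_true.mp main61 x (hx6 a)) y (hy1 b)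
  · exact List.all_eq_true.mp (List.all_eq_true.mp main16 x (hx1 a)) y (hy6 b)

theorem testBit_mono {x x' : ℕ} (hx : x' &&& x = x) {k : ℕ} (hk : x.testBit k = true) :
    x'.testBit k = true := by
  have h2 := congrArg (Nat.testBit · k) hx
  simp only [Nat.testBit_land, hk, Bool.and_true] at h2
  exact h2

theorem tAdjB_mono {x y x' y' : ℕ} (hx : x' &&& x = x) (hy : y' &&& y = y) (u v : ℕ)
    (h : tAdjB x y u v = true) : tAdjB x' y' u v = true := by
  unfold tAdjB at h ⊢
  split_ifs at h ⊢ <;> first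
    | exact h
    | exact testBit_mono hx h
    | exact testBit_mono hy h

theorem witOKB_mono {x y x' y' : ℕ} (hx : x' &&& x = x) (hy : y' &&& y = y) (w : Wit)
    (h : witOKB x y w = true) : witOKB x' y' w = true := by
  obtain ⟨⟨u0, u1, u2, u3⟩, ⟨v0, v1, v2, v3⟩⟩ := w
  simp only [witOKB, Bool.and_eq_true] at h ⊢
  exact ⟨⟨⟨⟨⟨tAdjB_mono hx hy _ _ h.1.1.1.1.1, tAdjB_mono hx hy _ _ h.1.1.1.1.2⟩,
    tAdjB_mono hx hy _ _ h.1.1.1.2⟩, tAdjB_mono hx hy _ _ h.1.1.2⟩,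
    tAdjB_mono hx hy _ _ h.1.2⟩, tAdjB_mono hx hy _ _ h.2⟩

theorem exists_wit {x y : ℕ} (hx : x < 256) (hy : y < 256)
    (h : (pc x = 3 ∧ pc y = 3) ∨ (pc x = 5 ∧ pc y = 2) ∨ (pc x = 2 ∧ pc y = 5)
      ∨ (pc x = 6 ∧ pc y = 1) ∨ (pc x = 1 ∧ pc y = 6)) :
    ∃ w ∈ witList, witOKB x y w = true := by
  have hmc := maskCheck_of_pc hx hy h
  simp only [maskCheck, List.any_eq_true, Bool.and_eq_true, beq_iff_eq] at hmc
  obtain ⟨m, hm, hxm, hym⟩ := hmc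
  obtain ⟨w, hw, hwok⟩ := maskPair_wit m hm
  exact ⟨w, hw, witOKB_mono hxm hym w hwok⟩


def cnt (T : Fin 4 × Fin 2 → Bool) : ℕ := (Finset.univ.filter (fun p => T p = true)).card

def mask (T : Fin 4 × Fin 2 → Bool) : ℕ :=
  (cond (T (0,0)) 1 0) + (cond (T (0,1)) 2 0) + (cond (T (1,0)) 4 0) + (cond (T (1,1)) 8 0) +
  (cond (T (2,0)) 16 0) + (cond (T (2,1)) 32 0) + (cond (T (3,0)) 64 0) + (cond (T (3,1)) 128 0)

set_option maxRecDepth 40000 in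
theorem mask_lt : ∀ T, mask T < 256 := by decide

set_option maxRecDepth 40000 in
theorem pc_mask : ∀ T, pc (mask T) = cnt T := by decide

set_option maxRecDepth 40000 in
theorem mask_testBit : ∀ T (a : Fin 4) (b : Fin 2),
    (mask T).testBit (2 * a.val + b.val) = T (a, b) := by decide

theorem count_lemma {m : ℕ} (hm : 3 ≤ m) (s : Fin m → ℕ) (h8 : ∀ j, s j ≤ 8)
    (hsum : 2 * m + 3 ≤ ∑ j, s j) :
    ∃ j1 j2, j1 ≠ j2 ∧ ((3 ≤ s j1 ∧ 3 ≤ s j2) ∨ (1 ≤ s j1 ∧ 1 ≤ s j2 ∧ 7 ≤ s j1 + s j2)) := by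
  by_contra hc
  have key : ∀ j1 j2, j1 ≠ j2 → s j1 ≤ 2 ∨ s j2 ≤ 2 := by
    intro j1 j2 hne
    by_contra hk
    push_neg at hk
    exact hc ⟨j1, j2, hne, Or.inl ⟨by omega, by omega⟩⟩
  have key2 : ∀ j1 j2, j1 ≠ j2 → 1 ≤ s j1 → 1 ≤ s j2 → s j1 + s j2 ≤ 6 := by
    intro j1 j2 hne h1 h2
    by_contra hk
    exact hc ⟨j1, j2, hne, Or.inr ⟨h1, h2, by omega⟩⟩
  have hcard : (Finset.univ : Finset (Fin m)).card = m := by simp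
  by_cases hbig : ∃ j0, 3 ≤ s j0
  · obtain ⟨j0, hj0⟩ := hbig
    have hmem : j0 ∈ (Finset.univ : Finset (Fin m)) := Finset.mem_univ _
    have hsplit := Finset.sum_erase_add Finset.univ s hmem
    have hcard' : (Finset.univ.erase j0).card = m - 1 := by
      rw [Finset.card_erase_of_mem hmem, hcard]
    have hsmall : ∀ j, j ≠ j0 → s j ≤ 2 := by
      intro j hj
      rcases key j0 j (fun h => hj h.symm) with h | h
      · omega
      · exact h
    by_cases hz : ∃ j1, j1 ≠ j0 ∧ 1 ≤ s j1
    · obtain ⟨j1, hne, h1⟩ := hz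
      have h16 : s j0 + s j1 ≤ 6 := key2 j0 j1 (fun h => hne h.symm) (by omega) h1
      by_cases h5 : s j0 ≤ 4
      · have hrest : ∑ j ∈ Finset.univ.erase j0, s j ≤ (m - 1) * 2 := by
          calc ∑ j ∈ Finset.univ.erase j0, s j ≤ ∑ _j ∈ Finset.univ.erase j0, 2 :=
                Finset.sum_le_sum (fun j hj => hsmall j (Finset.ne_of_mem_erase hj))
            _ = (m - 1) * 2 := by rw [Finset.sum_const, hcard', smul_eq_mul]
        omega
      · have hone : ∀ j, j ≠ j0 → s j ≤ 1 := by
          intro j hj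
          by_cases h1j : 1 ≤ s j
          · have := key2 j0 j (fun h => hj h.symm) (by omega) h1j
            omega
          · omega
        have hrest : ∑ j ∈ Finset.univ.erase j0, s j ≤ (m - 1) * 1 := by
          calc ∑ j ∈ Finset.univ.erase j0, s j ≤ ∑ _j ∈ Finset.univ.erase j0, 1 :=
                Finset.sum_le_sum (fun j hj => hone j (Finset.ne_of_mem_erase hj))
            _ = (m - 1) * 1 := by rw [Finset.sum_const, hcard', smul_eq_mul]
        have h8' := h8 j0
        omega
    · push_neg at hz
      have hrest : ∑ j ∈ Finset.univ.erase j0, s j = 0 := by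
        apply Finset.sum_eq_zero
        intro j hj
        have := hz j (Finset.ne_of_mem_erase hj)
        omega
      have h8' := h8 j0
      omega
  · push_neg at hbig
    have : ∑ j, s j ≤ ∑ _j : Fin m, 2 :=
      Finset.sum_le_sum (fun j _ => by have := hbig j; omega)
    rw [Finset.sum_const, hcard, smul_eq_mul] at this
    omega


/-- the vertex of the configuration (component `i`, pairs `j1`, `j2`) indexed by `u < 8`:
`0,1,2,3` are the path vertices, `4,5` pair `j1`, `6,7` pair `j2`. -/
def toVert {K T : ℕ} (i : Fin K) (j1 j2 : Fin T) (u : ℕ) :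
    (Fin K × Fin 4) ⊕ (Fin T × Fin 2) :=
  if h4 : u < 4 then Sum.inl (i, ⟨u, h4⟩)
  else if h6 : u < 6 then Sum.inr (j1, ⟨u - 4, by omega⟩)
  else if h8 : u < 8 then Sum.inr (j2, ⟨u - 6, by omega⟩)
  else Sum.inr (j2, ⟨0, by norm_num⟩)

theorem toVert_inj {K T : ℕ} (i : Fin K) {j1 j2 : Fin T} (hj : j1 ≠ j2) {u v : ℕ}
    (hu : u < 8) (hv : v < 8) (h : toVert i j1 j2 u = toVert i j1 j2 v) : u = v := by
  unfold toVert at h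
  split_ifs at h
  all_goals
    first
    | exact Sum.noConfusion h
    | (injection h with h
       injection h with hL hR
       first
       | exact absurd hL hj
       | exact absurd hL.symm hj
       | (simp only [Fin.mk.injEq] at hR; omega))

theorem toVert_eq_inl {K T : ℕ} {i : Fin K} {j1 j2 : Fin T} {u : ℕ} {e : Fin K} {a : Fin 4}
    (h : toVert i j1 j2 u = Sum.inl (e, a)) : e = i := by
  unfold toVert at h
  split_ifs at h
  all_goals
    first
    | exact Sum.noConfusion h
    | (injection h with h; injection h with hL hR; exact hL.symm)

theorem toVert_eq_inr {K T : ℕ} {i : Fin K} {j1 j2 : Fin T} {u : ℕ} {e : Fin T} {b : Fin 2}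
    (h : toVert i j1 j2 u = Sum.inr (e, b)) : e = j1 ∨ e = j2 := by
  unfold toVert at h
  split_ifs at h
  all_goals
    first
    | exact Sum.noConfusion h
    | (injection h with h; injection h with hL hR;
       first
       | exact Or.inl hL.symm
       | exact Or.inr hL.symm)

/-- the new embedding of `(K+2) P₄ ∪ t P₂`. -/
def newMap {K t n : ℕ} (f : ((Fin (K + 1) × Fin 4) ⊕ (Fin (t + 2) × Fin 2)) → Fin n)
    (i : Fin (K + 1)) (j1 j2 : Fin (t + 2)) (j2' : Fin (t + 1)) (q : Fin 8 → ℕ) :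
    ((Fin (K + 2) × Fin 4) ⊕ (Fin t × Fin 2)) → Fin n :=
  fun z => match z with
  | Sum.inl (c, a) =>
    if h0 : c.val = 0 then f (toVert i j1 j2 (q ⟨a.val, by have := a.isLt; omega⟩))
    else if h1 : c.val = 1 then f (toVert i j1 j2 (q ⟨4 + a.val, by have := a.isLt; omega⟩))
    else f (Sum.inl (i.succAbove ⟨c.val - 2, by have := c.isLt; omega⟩, a))
  | Sum.inr (p, b) => f (Sum.inr (j1.succAbove (j2'.succAbove p), b))

theorem newMap_inj {K t n : ℕ} (f : ((Fin (K + 1) × Fin 4) ⊕ (Fin (t + 2) × Fin 2)) ↪ Fin n)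
    (i : Fin (K + 1)) {j1 j2 : Fin (t + 2)} {j2' : Fin (t + 1)} {q : Fin 8 → ℕ}
    (hq : Function.Injective q) (hq8 : ∀ r, q r < 8) (hj2 : j1.succAbove j2' = j2) :
    Function.Injective (newMap (⇑f) i j1 j2 j2' q) := by
  have hj : j1 ≠ j2 := by rw [← hj2]; exact Fin.ne_succAbove j1 j2'
  have hτ1 : ∀ p : Fin t, j1.succAbove (j2'.succAbove p) ≠ j1 := fun p => Fin.succAbove_ne _ _
  have hτ2 : ∀ p : Fin t, j1.succAbove (j2'.succAbove p) ≠ j2 := by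
    intro p h
    rw [← hj2] at h
    exact Fin.succAbove_ne j2' p (Fin.succAbove_right_injective h)
  have hTV : ∀ (r r' : Fin 8), toVert i j1 j2 (q r) = toVert i j1 j2 (q r') → r = r' := by
    intro r r' h
    exact hq (toVert_inj i hj (hq8 r) (hq8 r') h)
  have hTVL : ∀ (r : Fin 8) (d : Fin K) (a : Fin 4),
      toVert i j1 j2 (q r) ≠ Sum.inl (i.succAbove d, a) := by
    intro r d a h
    exact absurd (toVert_eq_inl h) (Fin.succAbove_ne i d)
  have hTVR : ∀ (r : Fin 8) (p : Fin t) (b : Fin 2),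
      toVert i j1 j2 (q r) ≠ Sum.inr (j1.succAbove (j2'.succAbove p), b) := by
    intro r p b h
    rcases toVert_eq_inr h with h' | h'
    · exact hτ1 p h'
    · exact hτ2 p h'
  rintro (⟨c, a⟩ | ⟨p, b⟩) (⟨c', a'⟩ | ⟨p', b'⟩) h <;> simp only [newMap] at h
  · split_ifs at h with h0 h0' h1' h1 h0' h1' h0' h1' <;>
      replace h := f.injective h
    · -- 0,0
      have := hTV _ _ h
      simp only [Fin.mk.injEq] at this
      have ha : a = a' := Fin.ext this
      have hc : c = c' := Fin.ext (by omega)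
      rw [ha, hc]
    · -- 0,1
      have := hTV _ _ h
      simp only [Fin.mk.injEq] at this
      exact absurd this (by have := a'.isLt; omega)
    · exact absurd h (hTVL _ _ _)
    · -- 1,0
      have := hTV _ _ h
      simp only [Fin.mk.injEq] at this
      exact absurd this (by have := a.isLt; omega)
    · -- 1,1
      have := hTV _ _ h
      simp only [Fin.mk.injEq] at this
      have ha : a = a' := Fin.ext (by omega)
      have hc : c = c' := Fin.ext (by omega)
      rw [ha, hc]
    · exact absurd h (hTVL _ _ _)
    · exact absurd h.symm (hTVL _ _ _)
    · exact absurd h.symm (hTVL _ _ _)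
    · -- old, old
      injection h with h
      injection h with hL hR
      have hd := Fin.succAbove_right_injective (p := i) hL
      simp only [Fin.mk.injEq] at hd
      have hc : c = c' := Fin.ext (by omega)
      rw [hc, hR]
  · exfalso
    split_ifs at h with h0 h1 <;> replace h := f.injective h
    · exact hTVR _ _ _ h
    · exact hTVR _ _ _ h
    · exact Sum.inl_ne_inr h
  · exfalso
    split_ifs at h with h0 h1 <;> replace h := f.injective h
    · exact hTVR _ _ _ h.symm
    · exact hTVR _ _ _ h.symm
    · exact Sum.inr_ne_inl h
  · replace h := f.injective h
    injection h with h
    injection h with hL hR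
    have hp : p = p' := Fin.succAbove_right_injective
      (Fin.succAbove_right_injective (p := j1) hL)
    rw [hp, hR]


/-- The linear forest `kP4tP2` needed below; restated adjacency helper. -/
theorem kP4tP2_adj_inl {a b : ℕ} {u v : Fin a × Fin 4} (h : u.1 = v.1)
    (h2 : (SimpleGraph.pathGraph 4).Adj u.2 v.2) :
    (kP4tP2 a b).Adj (Sum.inl u) (Sum.inl v) := ⟨h, h2⟩

theorem kP4tP2_adj_inr {a b : ℕ} {u v : Fin b × Fin 2} (h : u.1 = v.1)
    (h2 : (SimpleGraph.pathGraph 2).Adj u.2 v.2) :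
    (kP4tP2 a b).Adj (Sum.inr u) (Sum.inr v) := ⟨h, h2⟩

theorem newMap_adj {K t n : ℕ} {G : SimpleGraph (Fin n)}
    (f : ((Fin (K + 1) × Fin 4) ⊕ (Fin (t + 2) × Fin 2)) → Fin n)
    (i : Fin (K + 1)) (j1 j2 : Fin (t + 2)) (j2' : Fin (t + 1)) (q : Fin 8 → ℕ) {x y : ℕ}
    (hq8 : ∀ r, q r < 8)
    (hadj : ∀ u v, u < 8 → v < 8 → tAdjB x y u v = true →
      G.Adj (f (toVert i j1 j2 u)) (f (toVert i j1 j2 v)))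
    (hcons : ∀ (r : ℕ) (h7 : r + 1 < 8), r ≠ 3 →
      tAdjB x y (q ⟨r, by omega⟩) (q ⟨r + 1, h7⟩) = true)
    (hold : ∀ e ∈ (kP4tP2 (K + 1) (t + 2)).edgeSet, Sym2.map f e ∈ G.edgeSet)
    {z1 z2 : (Fin (K + 2) × Fin 4) ⊕ (Fin t × Fin 2)} (hz : (kP4tP2 (K + 2) t).Adj z1 z2) :
    G.Adj (newMap f i j1 j2 j2' q z1) (newMap f i j1 j2 j2' q z2) := by
  have hedge : ∀ z1' z2', (kP4tP2 (K + 1) (t + 2)).Adj z1' z2' →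
      G.Adj (f z1') (f z2') := by
    intro z1' z2' h
    have hm := hold _ ((kP4tP2 (K + 1) (t + 2)).mem_edgeSet.mpr h)
    rwa [Sym2.map_pair_eq, SimpleGraph.mem_edgeSet] at hm
  rcases z1 with ⟨c, a⟩ | ⟨p, b⟩ <;> rcases z2 with ⟨c', b⟩ | ⟨p', b'⟩
  · obtain ⟨hc, hab⟩ := hz
    dsimp only at hc hab
    obtain rfl : c = c' := hc
    rw [SimpleGraph.pathGraph_adj] at hab
    have ha4 : a.val < 4 := a.isLt
    have hb4 : b.val < 4 := b.isLt
    simp only [newMap]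
    split_ifs with h0 h1
    · rcases hab with hab | hab
      · have hc1 := hcons a.val (by omega) (by omega)
        have he : (⟨a.val + 1, by omega⟩ : Fin 8) = ⟨b.val, by omega⟩ := Fin.ext (by simpa using hab)
        rw [he] at hc1
        exact hadj _ _ (hq8 _) (hq8 _) hc1
      · have hc1 := hcons b.val (by omega) (by omega)
        have he : (⟨b.val + 1, by omega⟩ : Fin 8) = ⟨a.val, by omega⟩ := Fin.ext (by simpa using hab)
        rw [he] at hc1
        exact (hadj _ _ (hq8 _) (hq8 _) hc1).symm
    · rcases hab with hab | hab
      · have hc1 := hcons (4 + a.val) (by omega) (by omega)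
        have he : (⟨4 + a.val + 1, by omega⟩ : Fin 8) = ⟨4 + b.val, by omega⟩ :=
          Fin.ext (by simp; omega)
        rw [he] at hc1
        exact hadj _ _ (hq8 _) (hq8 _) hc1
      · have hc1 := hcons (4 + b.val) (by omega) (by omega)
        have he : (⟨4 + b.val + 1, by omega⟩ : Fin 8) = ⟨4 + a.val, by omega⟩ :=
          Fin.ext (by simp; omega)
        rw [he] at hc1
        exact (hadj _ _ (hq8 _) (hq8 _) hc1).symm
    · exact hedge _ _ (kP4tP2_adj_inl rfl (SimpleGraph.pathGraph_adj.mpr hab))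
  · exact hz.elim
  · exact hz.elim
  · obtain ⟨hp, hbb⟩ := hz
    dsimp only at hp hbb
    obtain rfl : p = p' := hp
    exact hedge _ _ (kP4tP2_adj_inr rfl hbb)

end St15


/-- Let `k ≥ 2`, `t ≥ 1`, `n ≥ 4k + 2t`, let `c` be an edge-coloring of
`K_n` with no rainbow copy of `kP₄ ∪ tP₂`, let `f` be a rainbow copy of
`(k - 1)P₄ ∪ (t + 2)P₂` in `K_n` (with `H₁` its `P₄`-part and `H₂` its `P₂`-part), and
let `G` be a rainbow subgraph of `K_n` containing the edges of that copy. Then each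
`P₄`-component of `H₁` sends at most `2t + 6` edges of `G` to `V(H₂)`, and consequently
`|[V(H₁), V(H₂)]_G| ≤ 2(k - 1)(t + 3)`. -/
theorem stmt_15 (k t n : ℕ) (hk : 2 ≤ k) (ht : 1 ≤ t) (hn : 4 * k + 2 * t ≤ n)
    (c : Sym2 (Fin n) → ℕ)
    (hno : ¬ HasRainbowCopy n c (kP4tP2 k t))
    (f : ((Fin (k - 1) × Fin 4) ⊕ (Fin (t + 2) × Fin 2)) ↪ Fin n)
    (hH : Set.InjOn (fun e => c (Sym2.map (⇑f) e)) (kP4tP2 (k - 1) (t + 2)).edgeSet)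
    (G : SimpleGraph (Fin n))
    (hG : Set.InjOn c G.edgeSet)
    (hHG : ∀ e ∈ (kP4tP2 (k - 1) (t + 2)).edgeSet, Sym2.map (⇑f) e ∈ G.edgeSet) :
    (∀ i : Fin (k - 1),
      (edgesBetween G (Set.range fun a : Fin 4 => f (Sum.inl (i, a)))
        (Set.range fun p : Fin (t + 2) × Fin 2 => f (Sum.inr p))).ncard ≤ 2 * t + 6) ∧
    (edgesBetween G (Set.range fun p : Fin (k - 1) × Fin 4 => f (Sum.inl p))
      (Set.range fun p : Fin (t + 2) × Fin 2 => f (Sum.inr p))).ncard ≤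
        2 * (k - 1) * (t + 3) := by
  classical
  obtain _ | _ | K := k
  · exact absurd hk (by omega)
  · exact absurd hk (by omega)
  have main1 : ∀ i : Fin (K + 1 + 1 - 1),
      (edgesBetween G (Set.range fun a : Fin 4 => f (Sum.inl (i, a)))
        (Set.range fun p : Fin (t + 2) × Fin 2 => f (Sum.inr p))).ncard ≤ 2 * t + 6 := by
    intro i
    by_contra hlt
    push_neg at hlt
    set A : Set (Fin n) := Set.range fun a : Fin 4 => f (Sum.inl (i, a)) with hA
    set B : Set (Fin n) := Set.range fun p : Fin (t + 2) × Fin 2 => f (Sum.inr p) with hB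
    set F : Fin (t + 2) → Finset (Fin 4 × Fin 2) :=
      fun j => Finset.univ.filter
        (fun p => G.Adj (f (Sum.inl (i, p.1))) (f (Sum.inr (j, p.2)))) with hF
    have hFadj : ∀ j (p : Fin 4 × Fin 2), p ∈ F j →
        G.Adj (f (Sum.inl (i, p.1))) (f (Sum.inr (j, p.2))) := by
      intro j p hp
      simp only [hF, Finset.mem_filter] at hp
      exact hp.2
    have hsub : edgesBetween G A B ⊆
        ↑(Finset.univ.biUnion fun j : Fin (t + 2) =>
          (F j).image fun p => s(f (Sum.inl (i, p.1)), f (Sum.inr (j, p.2)))) := by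
      intro e he
      obtain ⟨hge, u, v, heq, hu, hv⟩ := he
      obtain ⟨a, rfl⟩ := hu
      obtain ⟨p, rfl⟩ := hv
      subst heq
      refine Finset.mem_coe.mpr (Finset.mem_biUnion.mpr ⟨p.1, Finset.mem_univ _,
        Finset.mem_image.mpr ⟨(a, p.2), ?_, by simp⟩⟩)
      simp only [hF, Finset.mem_filter]
      refine ⟨Finset.mem_univ _, ?_⟩
      have := (G.mem_edgeSet).mp hge
      simpa using this
    have hcount : (edgesBetween G A B).ncard ≤ ∑ j : Fin (t + 2), (F j).card := by
      have h1 : (edgesBetween G A B).ncard ≤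
          (Finset.univ.biUnion fun j : Fin (t + 2) =>
            (F j).image fun p => s(f (Sum.inl (i, p.1)), f (Sum.inr (j, p.2)))).card := by
        rw [← Set.ncard_coe_finset]
        exact Set.ncard_le_ncard hsub (Finset.finite_toSet _)
      refine h1.trans (Finset.card_biUnion_le.trans (Finset.sum_le_sum fun j _ => Finset.card_image_le))
    have hsum : 2 * (t + 2) + 3 ≤ ∑ j : Fin (t + 2), (F j).card := by omega
    have h8 : ∀ j, (F j).card ≤ 8 := by
      intro j
      have h1 : (F j).card ≤ (Finset.univ : Finset (Fin 4 × Fin 2)).card := by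
        simp only [hF]
        exact Finset.card_filter_le _ _
      simpa using h1
    obtain ⟨j1, j2, hj12, hsizes⟩ :=
      St15.count_lemma (by omega) (fun j => (F j).card) h8 hsum
    have hchoice : ∃ n1 n2 : ℕ, n1 ≤ (F j1).card ∧ n2 ≤ (F j2).card ∧
        ((n1 = 3 ∧ n2 = 3) ∨ (n1 = 5 ∧ n2 = 2) ∨ (n1 = 2 ∧ n2 = 5)
          ∨ (n1 = 6 ∧ n2 = 1) ∨ (n1 = 1 ∧ n2 = 6)) := by
      rcases hsizes with ⟨h1, h2⟩ | ⟨h1, h2, h3⟩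
      · exact ⟨3, 3, h1, h2, Or.inl ⟨rfl, rfl⟩⟩
      · by_cases hb : 3 ≤ (F j1).card ∧ 3 ≤ (F j2).card
        · exact ⟨3, 3, hb.1, hb.2, Or.inl ⟨rfl, rfl⟩⟩
        · rcases Nat.lt_or_ge ((F j1).card) 3 with hc | hc
          · rcases (show (F j1).card = 1 ∨ (F j1).card = 2 by omega) with h | h
            · exact ⟨1, 6, by omega, by omega, Or.inr (Or.inr (Or.inr (Or.inr ⟨rfl, rfl⟩)))⟩
            · exact ⟨2, 5, by omega, by omega, Or.inr (Or.inr (Or.inl ⟨rfl, rfl⟩))⟩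
          · have hc2 : (F j2).card ≤ 2 := by
              by_contra hc2
              exact hb ⟨hc, by omega⟩
            rcases (show (F j2).card = 1 ∨ (F j2).card = 2 by omega) with h | h
            · exact ⟨6, 1, by omega, by omega, Or.inr (Or.inr (Or.inr (Or.inl ⟨rfl, rfl⟩)))⟩
            · exact ⟨5, 2, by omega, by omega, Or.inr (Or.inl ⟨rfl, rfl⟩)⟩
    obtain ⟨n1, n2, hn1, hn2, hpat⟩ := hchoice
    obtain ⟨S1, hS1, hS1c⟩ := Finset.exists_subset_card_eq hn1
    obtain ⟨S2, hS2, hS2c⟩ := Finset.exists_subset_card_eq hn2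
    set x : ℕ := St15.mask (fun p => decide (p ∈ S1)) with hx
    set y : ℕ := St15.mask (fun p => decide (p ∈ S2)) with hy
    have hcnt1 : St15.cnt (fun p => decide (p ∈ S1)) = S1.card := by
      unfold St15.cnt
      congr 1
      ext p
      simp
    have hcnt2 : St15.cnt (fun p => decide (p ∈ S2)) = S2.card := by
      unfold St15.cnt
      congr 1
      ext p
      simp
    have hpc : (St15.pc x = 3 ∧ St15.pc y = 3) ∨ (St15.pc x = 5 ∧ St15.pc y = 2)
        ∨ (St15.pc x = 2 ∧ St15.pc y = 5) ∨ (St15.pc x = 6 ∧ St15.pc y = 1)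
        ∨ (St15.pc x = 1 ∧ St15.pc y = 6) := by
      rw [hx, hy, St15.pc_mask, St15.pc_mask, hcnt1, hcnt2, hS1c, hS2c]
      exact hpat
    obtain ⟨w, hw, hwok⟩ := St15.exists_wit (hx ▸ St15.mask_lt _) (hy ▸ St15.mask_lt _) hpc
    obtain ⟨⟨u0, u1, u2, u3⟩, ⟨v0, v1, v2, v3⟩⟩ := w
    obtain ⟨hnd, hb8⟩ := St15.witList_nodup _ hw
    simp only [St15.witVerts] at hnd hb8
    let l : List ℕ := [u0, u1, u2, u3, v0, v1, v2, v3]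
    have hlen : l.length = 8 := rfl
    let q : Fin 8 → ℕ := fun r => l.get ⟨r.val, by rw [hlen]; exact r.isLt⟩
    have hqinj : Function.Injective q := by
      intro r r' hrr
      have h2 := List.nodup_iff_injective_get.mp hnd hrr
      simp only [Fin.mk.injEq] at h2
      exact Fin.ext h2
    have hq8 : ∀ r, q r < 8 := fun r => hb8 _ (l.get_mem _)
    simp only [St15.witOKB, Bool.and_eq_true] at hwok
    have hcons : ∀ (r : ℕ) (h7 : r + 1 < 8), r ≠ 3 →
        St15.tAdjB x y (q ⟨r, by omega⟩) (q ⟨r + 1, h7⟩) = true := by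
      intro r h7 h3
      have hub : r < 7 := by omega
      interval_cases r
      · exact hwok.1.1.1.1.1
      · exact hwok.1.1.1.1.2
      · exact hwok.1.1.1.2
      · exact absurd rfl h3
      · exact hwok.1.1.2
      · exact hwok.1.2
      · exact hwok.2
    have hpath4 : ∀ a b : Fin 4, (a.val + 1 = b.val ∨ b.val + 1 = a.val) →
        G.Adj (f (Sum.inl (i, a))) (f (Sum.inl (i, b))) := by
      intro a b hab
      have hm := hHG _ ((kP4tP2 (K + 1) (t + 2)).mem_edgeSet.mpr
        (St15.kP4tP2_adj_inl (u := (i, a)) (v := (i, b)) rfl (SimpleGraph.pathGraph_adj.mpr hab)))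
      rwa [Sym2.map_pair_eq, SimpleGraph.mem_edgeSet] at hm
    have hpath2 : ∀ (jj : Fin (t + 2)) (b b' : Fin 2), b ≠ b' →
        G.Adj (f (Sum.inr (jj, b))) (f (Sum.inr (jj, b'))) := by
      intro jj b b' hbb
      have hadj2 : (SimpleGraph.pathGraph 2).Adj b b' := by
        rw [SimpleGraph.pathGraph_adj]
        have h1 := b.isLt
        have h2 := b'.isLt
        have h3 : b.val ≠ b'.val := fun hh => hbb (Fin.ext hh)
        omega
      have hm := hHG _ ((kP4tP2 (K + 1) (t + 2)).mem_edgeSet.mpr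
        (St15.kP4tP2_adj_inr (u := (jj, b)) (v := (jj, b')) rfl hadj2))
      rwa [Sym2.map_pair_eq, SimpleGraph.mem_edgeSet] at hm
    have hcr1 : ∀ (a : Fin 4) (b : Fin 2), x.testBit (2 * a.val + b.val) = true →
        G.Adj (f (Sum.inl (i, a))) (f (Sum.inr (j1, b))) := by
      intro a b hbit
      rw [hx, St15.mask_testBit] at hbit
      exact hFadj j1 (a, b) (hS1 (of_decide_eq_true hbit))
    have hcr2 : ∀ (a : Fin 4) (b : Fin 2), y.testBit (2 * a.val + b.val) = true →
        G.Adj (f (Sum.inl (i, a))) (f (Sum.inr (j2, b))) := by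
      intro a b hbit
      rw [hy, St15.mask_testBit] at hbit
      exact hFadj j2 (a, b) (hS2 (of_decide_eq_true hbit))
    have gadj : ∀ u v, u < 8 → v < 8 → St15.tAdjB x y u v = true →
        G.Adj (f (St15.toVert i j1 j2 u)) (f (St15.toVert i j1 j2 v)) := by
      intro u v hu hv h
      unfold St15.tAdjB at h
      split_ifs at h with p1 p2 p3 p4 p5
      · -- u < 4, v < 4
        simp only [Bool.or_eq_true, beq_iff_eq] at h
        have tu : St15.toVert i j1 j2 u = Sum.inl (i, ⟨u, by omega⟩) := by
          unfold St15.toVert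
          rw [dif_pos (by omega)]
        have tv : St15.toVert i j1 j2 v = Sum.inl (i, ⟨v, by omega⟩) := by
          unfold St15.toVert
          rw [dif_pos (by omega)]
        rw [tu, tv]
        exact hpath4 _ _ h
      · -- u < 4, 4 ≤ v < 6
        have tu : St15.toVert i j1 j2 u = Sum.inl (i, ⟨u, by omega⟩) := by
          unfold St15.toVert
          rw [dif_pos (by omega)]
        have tv : St15.toVert i j1 j2 v = Sum.inr (j1, ⟨v - 4, by omega⟩) := by
          unfold St15.toVert
          rw [dif_neg (by omega), dif_pos (by omega)]
        rw [tu, tv]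
        exact hcr1 ⟨u, by omega⟩ ⟨v - 4, by omega⟩ h
      · -- u < 4, 6 ≤ v
        have tu : St15.toVert i j1 j2 u = Sum.inl (i, ⟨u, by omega⟩) := by
          unfold St15.toVert
          rw [dif_pos (by omega)]
        have tv : St15.toVert i j1 j2 v = Sum.inr (j2, ⟨v - 6, by omega⟩) := by
          unfold St15.toVert
          rw [dif_neg (by omega), dif_neg (by omega), dif_pos (by omega)]
        rw [tu, tv]
        exact hcr2 ⟨u, by omega⟩ ⟨v - 6, by omega⟩ h
      · -- 4 ≤ u < 6, v < 4
        have tu : St15.toVert i j1 j2 u = Sum.inr (j1, ⟨u - 4, by omega⟩) := by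
          unfold St15.toVert
          rw [dif_neg (by omega), dif_pos (by omega)]
        have tv : St15.toVert i j1 j2 v = Sum.inl (i, ⟨v, by omega⟩) := by
          unfold St15.toVert
          rw [dif_pos (by omega)]
        rw [tu, tv]
        exact (hcr1 ⟨v, by omega⟩ ⟨u - 4, by omega⟩ h).symm
      · -- 6 ≤ u, v < 4
        have tu : St15.toVert i j1 j2 u = Sum.inr (j2, ⟨u - 6, by omega⟩) := by
          unfold St15.toVert
          rw [dif_neg (by omega), dif_neg (by omega), dif_pos (by omega)]
        have tv : St15.toVert i j1 j2 v = Sum.inl (i, ⟨v, by omega⟩) := by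
          unfold St15.toVert
          rw [dif_pos (by omega)]
        rw [tu, tv]
        exact (hcr2 ⟨v, by omega⟩ ⟨u - 6, by omega⟩ h).symm
      · -- 4 ≤ u, 4 ≤ v
        simp only [Bool.and_eq_true, beq_iff_eq, decide_eq_decide, bne_iff_ne, ne_eq] at h
        by_cases h6 : u < 6
        · have hv6 : v < 6 := h.1.mp h6
          have tu : St15.toVert i j1 j2 u = Sum.inr (j1, ⟨u - 4, by omega⟩) := by
            unfold St15.toVert
            rw [dif_neg (by omega), dif_pos (by omega)]
          have tv : St15.toVert i j1 j2 v = Sum.inr (j1, ⟨v - 4, by omega⟩) := by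
            unfold St15.toVert
            rw [dif_neg (by omega), dif_pos (by omega)]
          rw [tu, tv]
          exact hpath2 j1 _ _ (by simp only [ne_eq, Fin.mk.injEq]; omega)
        · have hv6 : ¬ v < 6 := fun hh => h6 (h.1.mpr hh)
          have tu : St15.toVert i j1 j2 u = Sum.inr (j2, ⟨u - 6, by omega⟩) := by
            unfold St15.toVert
            rw [dif_neg (by omega), dif_neg (by omega), dif_pos (by omega)]
          have tv : St15.toVert i j1 j2 v = Sum.inr (j2, ⟨v - 6, by omega⟩) := by
            unfold St15.toVert
            rw [dif_neg (by omega), dif_neg (by omega), dif_pos (by omega)]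
          rw [tu, tv]
          exact hpath2 j2 _ _ (by simp only [ne_eq, Fin.mk.injEq]; omega)
    obtain ⟨j2', hj2'⟩ := Fin.exists_succAbove_eq hj12.symm
    refine hno ⟨⟨St15.newMap (⇑f) i j1 j2 j2' q, St15.newMap_inj f i hqinj hq8 hj2'⟩, ?_⟩
    have hmap : ∀ e ∈ (kP4tP2 (K + 2) t).edgeSet,
        Sym2.map (St15.newMap (⇑f) i j1 j2 j2' q) e ∈ G.edgeSet := by
      intro e he
      induction e using Sym2.ind with
      | _ z1 z2 =>
        rw [SimpleGraph.mem_edgeSet] at he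
        rw [Sym2.map_pair_eq, SimpleGraph.mem_edgeSet]
        exact St15.newMap_adj (⇑f) i j1 j2 j2' q hq8 gadj hcons hHG he
    intro e1 he1 e2 he2 hce
    exact Sym2.map.injective (St15.newMap_inj f i hqinj hq8 hj2')
      (hG (hmap e1 he1) (hmap e2 he2) hce)
  refine ⟨main1, ?_⟩
  set B : Set (Fin n) := Set.range fun p : Fin (t + 2) × Fin 2 => f (Sum.inr p) with hB
  have hsub : edgesBetween G (Set.range fun p : Fin (K + 1 + 1 - 1) × Fin 4 => f (Sum.inl p)) B ⊆
      ↑(Finset.univ.biUnion fun i : Fin (K + 1 + 1 - 1) =>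
        (Set.toFinite (edgesBetween G
          (Set.range fun a : Fin 4 => f (Sum.inl (i, a))) B)).toFinset) := by
    intro e he
    obtain ⟨hge, u, v, heq, hu, hv⟩ := he
    obtain ⟨p, rfl⟩ := hu
    refine Finset.mem_coe.mpr (Finset.mem_biUnion.mpr ⟨p.1, Finset.mem_univ _, ?_⟩)
    rw [Set.Finite.mem_toFinset]
    exact ⟨hge, f (Sum.inl p), v, heq, ⟨p.2, by simp⟩, hv⟩
  have h2 : (edgesBetween G (Set.range fun p : Fin (K + 1 + 1 - 1) × Fin 4 => f (Sum.inl p)) B).ncard ≤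
      ∑ i : Fin (K + 1 + 1 - 1),
        (edgesBetween G (Set.range fun a : Fin 4 => f (Sum.inl (i, a))) B).ncard := by
    have h1 : (edgesBetween G (Set.range fun p : Fin (K + 1 + 1 - 1) × Fin 4 => f (Sum.inl p)) B).ncard ≤
        (Finset.univ.biUnion fun i : Fin (K + 1 + 1 - 1) =>
          (Set.toFinite (edgesBetween G
            (Set.range fun a : Fin 4 => f (Sum.inl (i, a))) B)).toFinset).card := by
      rw [← Set.ncard_coe_finset]
      exact Set.ncard_le_ncard hsub (Finset.finite_toSet _)
    refine h1.trans (Finset.card_biUnion_le.trans (le_of_eq (Finset.sum_congr rfl fun i _ => ?_)))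
    exact (Set.ncard_eq_toFinset_card _ _).symm
  have h3 : ∑ i : Fin (K + 1 + 1 - 1),
      (edgesBetween G (Set.range fun a : Fin 4 => f (Sum.inl (i, a))) B).ncard ≤
      (K + 1) * (2 * t + 6) := by
    have := Finset.sum_le_sum (fun i (_ : i ∈ Finset.univ) => main1 i)
    rw [Finset.sum_const] at this
    simpa using this
  have h4 : (K + 1) * (2 * t + 6) = 2 * (K + 1 + 1 - 1) * (t + 3) := by
    have hr : K + 1 + 1 - 1 = K + 1 := rfl
    rw [hr]
    ring
  omega
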